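/- The in-sample softmax optimality operator T*_β has a unique fixed point q̃*_β : S × A → ℝ (i.e., q̃*_β = T*_β q̃*_β), and for every initial q : S × A → ℝ the value-iteration sequence q_{k+1} = T*_β q_k converges in sup norm to q̃*_β. -/

import Mathlib

open Finset

/-- The in-sample softmax optimality operator
`(T*_β q)(s,a) = r(s,a) + γ ∑_{s'} P(s,a)(s') · τ log ∑_{a' ∈ supp β(·|s')} exp(q(s',a')/τ)`. -/
noncomputable def Tstar {S A : Type*} [Fintype S] [Fintype A]
    (r : S → A → ℝ) (γ τ : ℝ) (P : S → A → S → ℝ) (β : S → A → ℝ)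
    (q : S → A → ℝ) : S → A → ℝ := fun s a =>
  r s a + γ * ∑ s', P s a s' *
    (τ * Real.log (∑ a' ∈ Finset.univ.filter (fun a' => 0 < β s' a'), Real.exp (q s' a' / τ)))

lemma lse_le {A : Type*} {t : Finset A} (ht : t.Nonempty) {τ : ℝ} (hτ : 0 < τ)
    (x y : A → ℝ) {M : ℝ} (hM : ∀ a ∈ t, x a - y a ≤ M) :
    τ * Real.log (∑ a ∈ t, Real.exp (x a / τ)) ≤
      M + τ * Real.log (∑ a ∈ t, Real.exp (y a / τ)) := by
  have hpos : 0 < ∑ a ∈ t, Real.exp (y a / τ) :=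
    Finset.sum_pos (fun a _ => Real.exp_pos _) ht
  have hposx : 0 < ∑ a ∈ t, Real.exp (x a / τ) :=
    Finset.sum_pos (fun a _ => Real.exp_pos _) ht
  have h1 : ∑ a ∈ t, Real.exp (x a / τ) ≤ Real.exp (M / τ) * ∑ a ∈ t, Real.exp (y a / τ) := by
    rw [Finset.mul_sum]
    refine Finset.sum_le_sum fun a ha => ?_
    rw [← Real.exp_add]
    apply Real.exp_le_exp.mpr
    rw [← add_div]
    exact (div_le_div_iff_of_pos_right hτ).mpr (by linarith [hM a ha])
  have h2 := Real.log_le_log hposx h1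
  rw [Real.log_mul (Real.exp_pos _).ne' hpos.ne', Real.log_exp] at h2
  have h3 := mul_le_mul_of_nonneg_left h2 hτ.le
  calc τ * Real.log (∑ a ∈ t, Real.exp (x a / τ))
      ≤ τ * (M / τ + Real.log (∑ a ∈ t, Real.exp (y a / τ))) := h3
    _ = M + τ * Real.log (∑ a ∈ t, Real.exp (y a / τ)) := by field_simp

lemma lse_abs_le {A : Type*} {t : Finset A} (ht : t.Nonempty) {τ : ℝ} (hτ : 0 < τ)
    (x y : A → ℝ) {M : ℝ} (hM : ∀ a ∈ t, |x a - y a| ≤ M) :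
    |τ * Real.log (∑ a ∈ t, Real.exp (x a / τ)) -
      τ * Real.log (∑ a ∈ t, Real.exp (y a / τ))| ≤ M := by
  rw [abs_sub_le_iff]
  constructor
  · have := lse_le ht hτ x y (fun a ha => (abs_le.mp (hM a ha)).2)
    linarith
  · have := lse_le ht hτ y x (fun a ha => by
      have := (abs_le.mp (hM a ha)).1; linarith)
    linarith

/-- `T*_β` has a unique fixed point, and value iteration `q_{k+1} = T*_β q_k` converges to it
in sup norm from any initial `q`. -/
theorem Tstar_fixed_point_unique_and_value_iteration {S A : Type*}
    [Fintype S] [Fintype A] [Nonempty S] [Nonempty A]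
    (r : S → A → ℝ) (γ : ℝ) (hγ0 : 0 ≤ γ) (hγ1 : γ < 1)
    (P : S → A → S → ℝ) (hP0 : ∀ s a s', 0 ≤ P s a s') (hP1 : ∀ s a, (∑ s', P s a s') = 1)
    (τ : ℝ) (hτ : 0 < τ)
    (β : S → A → ℝ) (hβ0 : ∀ s a, 0 ≤ β s a) (hβ1 : ∀ s, (∑ a, β s a) = 1) :
    ∃ qstar : S → A → ℝ, Tstar r γ τ P β qstar = qstar ∧
      (∀ q : S → A → ℝ, Tstar r γ τ P β q = q → q = qstar) ∧
      (∀ q0 : S → A → ℝ, Filter.Tendsto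
        (fun k : ℕ => Finset.univ.sup' Finset.univ_nonempty
          (fun p : S × A => |((Tstar r γ τ P β)^[k] q0) p.1 p.2 - qstar p.1 p.2|))
        Filter.atTop (nhds 0)) := by
  set f := Tstar r γ τ P β with hf
  -- the support sets are nonempty
  have hne : ∀ s' : S, (Finset.univ.filter (fun a' => 0 < β s' a')).Nonempty := by
    intro s'
    have h0 : (0 : ℝ) < ∑ a, β s' a := by rw [hβ1]; norm_num
    obtain ⟨a, _, ha⟩ := Finset.exists_lt_of_sum_lt (by simpa using h0 :
      (∑ _a : A, (0:ℝ)) < ∑ a, β s' a)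
    exact ⟨a, Finset.mem_filter.mpr ⟨Finset.mem_univ a, ha⟩⟩
  -- contraction estimate
  have key : ∀ q q' : S → A → ℝ, dist (f q) (f q') ≤ γ * dist q q' := by
    intro q q'
    have hd0 : (0:ℝ) ≤ γ * dist q q' := mul_nonneg hγ0 dist_nonneg
    rw [dist_pi_le_iff hd0]
    intro s
    rw [dist_pi_le_iff hd0]
    intro a
    rw [Real.dist_eq]
    have hL : ∀ s' : S,
        |τ * Real.log (∑ a' ∈ Finset.univ.filter (fun a' => 0 < β s' a'),
            Real.exp (q s' a' / τ)) -
          τ * Real.log (∑ a' ∈ Finset.univ.filter (fun a' => 0 < β s' a'),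
            Real.exp (q' s' a' / τ))| ≤ dist q q' := by
      intro s'
      refine lse_abs_le (hne s') hτ _ _ fun a' _ => ?_
      rw [← Real.dist_eq]
      exact (dist_le_pi_dist (q s') (q' s') a').trans (dist_le_pi_dist q q' s')
    have heq : f q s a - f q' s a = γ * ∑ s', P s a s' *
        (τ * Real.log (∑ a' ∈ Finset.univ.filter (fun a' => 0 < β s' a'),
            Real.exp (q s' a' / τ)) -
          τ * Real.log (∑ a' ∈ Finset.univ.filter (fun a' => 0 < β s' a'),
            Real.exp (q' s' a' / τ))) := by
      simp only [hf, Tstar]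
      rw [add_sub_add_left_eq_sub, ← mul_sub, ← Finset.sum_sub_distrib]
      congr 1
      exact Finset.sum_congr rfl fun s' _ => by ring
    rw [heq, abs_mul, abs_of_nonneg hγ0]
    refine mul_le_mul_of_nonneg_left ?_ hγ0
    calc |∑ s', P s a s' * _| ≤ ∑ s', |P s a s' * _| := Finset.abs_sum_le_sum_abs _ _
      _ ≤ ∑ s', P s a s' * dist q q' := by
          refine Finset.sum_le_sum fun s' _ => ?_
          rw [abs_mul, abs_of_nonneg (hP0 s a s')]
          exact mul_le_mul_of_nonneg_left (hL s') (hP0 s a s')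
      _ = dist q q' := by rw [← Finset.sum_mul, hP1, one_mul]
  set K : NNReal := ⟨γ, hγ0⟩ with hK
  have hlip : LipschitzWith K f := LipschitzWith.of_dist_le_mul key
  have hC : ContractingWith K f := ⟨by exact_mod_cast hγ1, hlip⟩
  refine ⟨hC.fixedPoint f, ?_, ?_, ?_⟩
  · exact hC.fixedPoint_isFixedPt
  · intro q hq
    exact hC.fixedPoint_unique hq
  · intro q0
    have ht : Filter.Tendsto (fun k => dist (f^[k] q0) (hC.fixedPoint f))
        Filter.atTop (nhds 0) :=
      tendsto_iff_dist_tendsto_zero.mp (hC.tendsto_iterate_fixedPoint q0)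
    refine squeeze_zero (fun k => ?_) (fun k => ?_) ht
    · have h := Finset.le_sup' (fun p : S × A => |f^[k] q0 p.1 p.2 - hC.fixedPoint f p.1 p.2|)
        (Finset.mem_univ (Classical.arbitrary (S × A)))
      exact le_trans (abs_nonneg _) h
    · refine Finset.sup'_le _ _ fun p _ => ?_
      rw [← Real.dist_eq]
      exact (dist_le_pi_dist (f^[k] q0 p.1) (hC.fixedPoint f p.1) p.2).trans
        (dist_le_pi_dist (f^[k] q0) (hC.fixedPoint f) p.1)
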